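/- Let a > 0, α > 0 and k be real with k + α < 0, and let φ : ℝ → ℝ be continuous with lim_{x→∞} e^{αx} φ(x) = 0 and lim_{x→−∞} φ(x)/e^{kx} = 1. For τ > 0 and x ∈ ℝ define w(τ,x) = (2√π)^{-1} ∫_{-∞}^{∞} e^{-η²/4} φ(x + a√τ·η) dη. Then for any 0 < τ₀ < τ₁, w(τ,x)/e^{k²a²τ + kx} → 1 as x → −∞, uniformly for τ ∈ [τ₀, τ₁]. -/

import Mathlib

open Real Set Filter MeasureTheory

-- L2': integrability of Gaussian with shift
lemma gauss_shift_integrable (c : ℝ) : Integrable (fun x : ℝ => exp (-(x - c)^2/4)) := by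
  have h := (integrable_exp_neg_mul_sq (b := (1:ℝ)/4) (by norm_num)).comp_sub_right c
  convert h using 2 with x
  ring_nf

-- L1: Gaussian integral with shift
lemma gauss_shift_integral (c : ℝ) : ∫ x : ℝ, exp (-(x - c)^2/4) = 2 * sqrt π := by
  rw [show (fun x : ℝ => exp (-(x - c)^2/4)) = fun x => (fun y : ℝ => exp (-(1/4) * y^2)) (x - c) by funext x; ring_nf]
  rw [integral_sub_right_eq_self (fun y : ℝ => exp (-(1/4) * y^2)) c]
  rw [integral_gaussian]
  rw [show π / (1/4) = 4 * π by ring, show (4:ℝ) * π = 2^2 * π by norm_num,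
    sqrt_mul (by positivity), sqrt_sq (by norm_num)]

-- completing the square identity
lemma complete_sq (c d x : ℝ) : -(x - c)^2/4 + d*x = -(x - (c + 2*d))^2/4 + (d*c + d^2) := by ring

lemma gauss_lin_integrable (c d : ℝ) : Integrable (fun x : ℝ => exp (-(x - c)^2/4 + d*x)) := by
  have : (fun x : ℝ => exp (-(x - c)^2/4 + d*x))
      = fun x => exp (d*c + d^2) * exp (-(x - (c + 2*d))^2/4) := by
    funext x; rw [← exp_add]; ring_nf
  rw [this]
  exact (gauss_shift_integrable _).const_mul _

lemma gauss_lin_integral (c d : ℝ) :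
    ∫ x : ℝ, exp (-(x - c)^2/4 + d*x) = 2 * sqrt π * exp (d*c + d^2) := by
  have : (fun x : ℝ => exp (-(x - c)^2/4 + d*x))
      = fun x => exp (d*c + d^2) * exp (-(x - (c + 2*d))^2/4) := by
    funext x; rw [← exp_add]; ring_nf
  rw [this, integral_const_mul, gauss_shift_integral]; ring

lemma exp_lin_tail_integrableOn (c R : ℝ) :
    IntegrableOn (fun x : ℝ => exp (-(x - c)/4)) (Ioi R) := by
  have h := (exp_neg_integrableOn_Ioi R (show (0:ℝ) < 1/4 by norm_num)).const_mul (exp (c/4))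
  refine IntegrableOn.congr_fun h (fun x _ => ?_) measurableSet_Ioi
  rw [← exp_add]; congr 1; ring

lemma exp_lin_tail_integral (c R : ℝ) :
    ∫ x in Ioi R, exp (-(x - c)/4) = 4 * exp (-(R - c)/4) := by
  have h := integral_Ioi_of_hasDerivAt_of_tendsto'
    (f := fun x : ℝ => -4 * exp (-(x - c)/4)) (f' := fun x : ℝ => exp (-(x - c)/4))
    (a := R) (m := 0) ?_ (exp_lin_tail_integrableOn c R) ?_
  · rw [h]; ring
  · intro x _
    have : HasDerivAt (fun x : ℝ => -(x - c)/4) (-(1:ℝ)/4) x := by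
      simpa using (((hasDerivAt_id x).sub_const c).neg.div_const 4)
    have := ((this.exp).const_mul (-4 : ℝ))
    convert this using 1
    rfl
    ring
  · have : Tendsto (fun x : ℝ => -(x - c)/4) atTop atBot := by
      apply Tendsto.atBot_div_const (by norm_num)
      exact tendsto_neg_atBot_iff.mpr (tendsto_atTop_add_const_right _ _ tendsto_id)
    have := (tendsto_exp_atBot.comp this).const_mul (-4 : ℝ)
    simpa using this

lemma gauss_tail (c R : ℝ) (hR : c + 1 ≤ R) :
    ∫ x in Ioi R, exp (-(x - c)^2/4) ≤ 4 * exp (-(R - c)/4) := by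
  calc ∫ x in Ioi R, exp (-(x - c)^2/4) ≤ ∫ x in Ioi R, exp (-(x - c)/4) := by
        apply setIntegral_mono_on
        · exact (gauss_shift_integrable c).integrableOn
        · exact exp_lin_tail_integrableOn c R
        · exact measurableSet_Ioi
        · intro x hx
          apply exp_le_exp.mpr
          have h1 : 1 ≤ x - c := by simp at hx; linarith
          nlinarith
      _ = 4 * exp (-(R - c)/4) := exp_lin_tail_integral c R

lemma psi_bound (α k : ℝ) (φ : ℝ → ℝ) (hφ : Continuous φ)
    (h1 : Tendsto (fun x => Real.exp (α * x) * φ x) atTop (nhds 0))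
    (h2 : Tendsto (fun x => φ x / Real.exp (k * x)) atBot (nhds 1)) :
    ∃ C : ℝ, 1 ≤ C ∧ ∀ y, |φ y / Real.exp (k*y) - 1| ≤ C * (1 + Real.exp (-(k+α)*y)) := by
  obtain ⟨M₁, hM₁⟩ := eventually_atBot.mp (Metric.tendsto_nhds.mp h2 1 one_pos)
  obtain ⟨M₂, hM₂⟩ := eventually_atTop.mp (Metric.tendsto_nhds.mp h1 1 one_pos)
  set M₃ := max M₂ M₁ with hM₃
  have hcont : ContinuousOn (fun y => φ y / Real.exp (k*y) - 1) (Icc M₁ M₃) :=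
    ((hφ.div (continuous_const.mul continuous_id).rexp (fun y => (exp_pos _).ne')).sub continuous_const).continuousOn
  obtain ⟨C₀, hC₀⟩ := (isCompact_Icc (a := M₁) (b := M₃)).exists_bound_of_continuousOn hcont
  refine ⟨max 1 C₀, le_max_left _ _, fun y => ?_⟩
  have hpos : (0:ℝ) < 1 + Real.exp (-(k+α)*y) := by positivity
  have hC1 : (1:ℝ) ≤ max 1 C₀ := le_max_left _ _
  rcases le_total y M₁ with hy | hy
  · have := hM₁ y hy
    rw [Real.dist_eq] at this
    nlinarith [Real.exp_pos (-(k+α)*y)]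
  · rcases le_total y M₃ with hy2 | hy2
    · have := hC₀ y ⟨hy, hy2⟩
      rw [Real.norm_eq_abs] at this
      have : |φ y / Real.exp (k*y) - 1| ≤ max 1 C₀ := le_trans this (le_max_right _ _)
      nlinarith [Real.exp_pos (-(k+α)*y)]
    · have hyM2 : M₂ ≤ y := le_trans (le_max_left _ _) hy2
      have h := hM₂ y hyM2
      rw [Real.dist_eq, sub_zero] at h
      have hb : |φ y| ≤ Real.exp (-α*y) := by
        have h2' : |Real.exp (α*y)| * |φ y| ≤ 1 := by rw [← abs_mul]; exact h.le
        rw [abs_of_pos (Real.exp_pos _)] at h2'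
        rw [show -α*y = -(α*y) by ring, Real.exp_neg, inv_eq_one_div,
          le_div_iff₀ (Real.exp_pos _)]
        nlinarith [h2']
      have hpsi : |φ y / Real.exp (k*y)| ≤ Real.exp (-(k+α)*y) := by
        rw [abs_div, abs_of_pos (Real.exp_pos _), div_le_iff₀ (Real.exp_pos _), ← Real.exp_add]
        calc |φ y| ≤ Real.exp (-α*y) := hb
          _ = Real.exp (-(k+α)*y + k*y) := by congr 1; ring
      have : |φ y / Real.exp (k*y) - 1| ≤ |φ y / Real.exp (k*y)| + 1 := by
        calc |φ y / Real.exp (k*y) - 1| ≤ |φ y / Real.exp (k*y)| + |(1:ℝ)| := abs_sub _ _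
          _ = _ := by rw [abs_one]
      nlinarith [Real.exp_pos (-(k+α)*y)]

set_option maxHeartbeats 1000000 in
theorem stmt_17 (a α k : ℝ) (ha : 0 < a) (hα : 0 < α) (hkα : k + α < 0)
    (φ : ℝ → ℝ) (hφ : Continuous φ)
    (h1 : Tendsto (fun x => Real.exp (α * x) * φ x) atTop (nhds 0))
    (h2 : Tendsto (fun x => φ x / Real.exp (k * x)) atBot (nhds 1))
    (τ₀ τ₁ : ℝ) (hτ0 : 0 < τ₀) (hτ01 : τ₀ < τ₁) :
    let w : ℝ → ℝ → ℝ := fun τ x =>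
      (2 * Real.sqrt Real.pi)⁻¹ *
        ∫ η : ℝ, Real.exp (-η ^ 2 / 4) * φ (x + a * Real.sqrt τ * η)
    TendstoUniformlyOn
      (fun x τ => w τ x / Real.exp (k ^ 2 * a ^ 2 * τ + k * x)) (fun _ => 1)
      atBot (Icc τ₀ τ₁) := by
  intro w
  rw [Metric.tendstoUniformlyOn_iff]
  intro ε hε
  -- setup
  set β : ℝ := -(k + α) with hβ_def
  have hβ : 0 < β := by simp [hβ_def]; linarith
  obtain ⟨C, hC1, hC⟩ := psi_bound α k φ hφ h1 h2
  have hC0 : 0 < C := lt_of_lt_of_le one_pos hC1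
  obtain ⟨M, hM⟩ := eventually_atBot.mp (Metric.tendsto_nhds.mp h2 (ε/2) (by positivity))
  set s₁ : ℝ := Real.sqrt τ₁ with hs₁_def
  have hs₁ : 0 < s₁ := Real.sqrt_pos.mpr (lt_trans hτ0 hτ01)
  set cb : ℝ := 2 * |k| * a * s₁ with hcb_def
  set Emax : ℝ := |2*k*β + β^2| * a^2 * τ₁ with hEmax_def
  have hsp : (0:ℝ) < Real.sqrt π := Real.sqrt_pos.mpr Real.pi_pos
  set r : ℝ → ℝ := fun x => (M - x)/(a*s₁) with hr_def
  -- eventual conditions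
  have hrt : Tendsto r atBot atTop := by
    apply Tendsto.atTop_div_const (by positivity)
    exact tendsto_atTop_add_const_left _ M tendsto_neg_atBot_atTop
  have he1 : ∀ᶠ x in atBot, x ≤ M := eventually_le_atBot M
  have he2 : ∀ᶠ x in atBot, cb + 1 ≤ r x := hrt.eventually_ge_atTop (cb+1)
  have he3 : ∀ᶠ x in atBot, (2*Real.sqrt π)⁻¹ * (4*C) * Real.exp (-(r x - cb)/4) < ε/4 := by
    have h' : Tendsto (fun x => -(r x - cb)/4) atBot atBot := by
      apply Tendsto.atBot_div_const (by norm_num)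
      apply tendsto_neg_atTop_atBot.comp
      simpa [sub_eq_add_neg] using tendsto_atTop_add_const_right atBot (-cb) hrt
    have := ((Real.tendsto_exp_atBot.comp h').const_mul ((2*Real.sqrt π)⁻¹ * (4*C)))
    rw [mul_zero] at this
    exact this.eventually_lt_const (by positivity)
  have he4 : ∀ᶠ x in atBot, C * Real.exp Emax * Real.exp (β*x) < ε/4 := by
    have h' : Tendsto (fun x : ℝ => β*x) atBot atBot := tendsto_id.const_mul_atBot hβ
    have := ((Real.tendsto_exp_atBot.comp h').const_mul (C * Real.exp Emax))
    rw [mul_zero] at this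
    exact this.eventually_lt_const (by positivity)
  filter_upwards [he1, he2, he3, he4] with x hx1 hx2 hx3 hx4
  intro τ hτ
  obtain ⟨hτl, hτu⟩ := hτ
  have hτpos : 0 < τ := lt_of_lt_of_le hτ0 hτl
  set s : ℝ := Real.sqrt τ with hs_def
  have hs2 : s^2 = τ := Real.sq_sqrt hτpos.le
  have hspos : 0 < s := Real.sqrt_pos.mpr hτpos
  have hss₁ : s ≤ s₁ := Real.sqrt_le_sqrt hτu
  set c : ℝ := 2*k*a*s with hc_def
  set B : ℝ := β*a*s with hB_def
  have hccb : c ≤ cb := by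
    show 2*k*a*s ≤ 2 * |k| * a * s₁
    have h1' := le_abs_self k
    have h2' := abs_nonneg k
    nlinarith [mul_nonneg h2' (sub_nonneg.mpr hss₁), mul_nonneg (sub_nonneg.mpr h1') hspos.le, ha.le, hspos.le]
  set G : ℝ → ℝ := fun η => Real.exp (-(η - c)^2/4) with hG_def
  set ψ : ℝ → ℝ := fun y => φ y / Real.exp (k*y) with hψ_def
  set E : ℝ := Real.exp (k^2*a^2*τ + k*x) with hE_def
  -- pointwise identity
  have key : ∀ η : ℝ, Real.exp (-η^2/4) * φ (x + a*s*η) / E = G η * ψ (x + a*s*η) := by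
    intro η
    have hexp : Real.exp (-η^2/4) / E = G η / Real.exp (k*(x + a*s*η)) := by
      rw [hE_def, hG_def, ← Real.exp_sub, ← Real.exp_sub]
      congr 1
      rw [← hs2]; ring
    calc Real.exp (-η^2/4) * φ (x + a*s*η) / E
        = φ (x + a*s*η) * (Real.exp (-η^2/4) / E) := by ring
      _ = φ (x + a*s*η) * (G η / Real.exp (k*(x + a*s*η))) := by rw [hexp]
      _ = G η * ψ (x + a*s*η) := by rw [hψ_def]; ring
  -- integrability
  have hGint : Integrable G := gauss_shift_integrable c
  have hGBint : Integrable (fun η : ℝ => Real.exp (-(η - c)^2/4 + B*η)) := gauss_lin_integrable c B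
  have hDint : Integrable (fun η : ℝ => C * (G η + Real.exp (β*x) * Real.exp (-(η - c)^2/4 + B*η))) :=
    (hGint.add (hGBint.const_mul _)).const_mul C
  have hψcont : Continuous ψ := hφ.div (continuous_const.mul continuous_id).rexp (fun y => (Real.exp_pos _).ne')
  have hcomp : Continuous (fun η : ℝ => x + a*s*η) := continuous_const.add (continuous_const.mul continuous_id)
  have hbnd : ∀ η : ℝ, |G η * (ψ (x + a*s*η) - 1)| ≤ C * (G η + Real.exp (β*x) * Real.exp (-(η - c)^2/4 + B*η)) := by
    intro η
    have hGpos : 0 < G η := Real.exp_pos _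
    have h := hC (x + a*s*η)
    rw [abs_mul, abs_of_pos hGpos]
    have hexpeq : Real.exp (-(k+α)*(x + a*s*η)) = Real.exp (β*x) * Real.exp (B*η) := by
      rw [← Real.exp_add]; congr 1; rw [hβ_def, hB_def]; ring
    calc G η * |ψ (x + a*s*η) - 1| ≤ G η * (C * (1 + Real.exp (-(k+α)*(x + a*s*η)))) :=
          mul_le_mul_of_nonneg_left h hGpos.le
      _ = C * (G η + Real.exp (β*x) * (G η * Real.exp (B*η))) := by rw [hexpeq]; ring
      _ = C * (G η + Real.exp (β*x) * Real.exp (-(η - c)^2/4 + B*η)) := by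
          rw [hG_def, ← Real.exp_add]
  have hGcont : Continuous G := by
    show Continuous fun η : ℝ => Real.exp (-(η - c)^2/4)
    fun_prop
  have hint1 : Integrable (fun η : ℝ => G η * (ψ (x + a*s*η) - 1)) := by
    apply Integrable.mono' hDint
    · exact (hGcont.mul ((hψcont.comp hcomp).sub continuous_const)).aestronglyMeasurable
    · exact ae_of_all _ (fun η => by rw [Real.norm_eq_abs]; exact hbnd η)
  have hint2 : Integrable (fun η : ℝ => G η * ψ (x + a*s*η)) := by
    have : (fun η : ℝ => G η * ψ (x + a*s*η)) = fun η => G η * (ψ (x + a*s*η) - 1) + G η := by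
      funext η; ring
    rw [this]; exact hint1.add hGint
  -- rewrite the ratio
  have hwE : w τ x / E = (2*Real.sqrt π)⁻¹ * ∫ η : ℝ, G η * ψ (x + a*s*η) := by
    have hw_def : w τ x = (2*Real.sqrt π)⁻¹ * ∫ η : ℝ, Real.exp (-η^2/4) * φ (x + a*s*η) := rfl
    rw [hw_def, mul_div_assoc, ← MeasureTheory.integral_div]
    congr 1
    exact integral_congr_ae (ae_of_all _ key)
  have hsplit : w τ x / E - 1 = (2*Real.sqrt π)⁻¹ * ∫ η : ℝ, G η * (ψ (x + a*s*η) - 1) := by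
    have hGval : ∫ η : ℝ, G η = 2*Real.sqrt π := gauss_shift_integral c
    have h1' : (1:ℝ) = (2*Real.sqrt π)⁻¹ * ∫ η : ℝ, G η := by
      rw [hGval, inv_mul_cancel₀ (by positivity)]
    rw [hwE]
    conv_lhs => rw [h1']
    rw [← mul_sub, ← MeasureTheory.integral_sub hint2 hGint]
    congr 1
    exact integral_congr_ae (ae_of_all _ (fun η => by ring))
  -- abbreviations
  have hGpos : ∀ η : ℝ, 0 < G η := fun η => Real.exp_pos _
  have habs : Integrable (fun η : ℝ => |G η * (ψ (x + a*s*η) - 1)|) := hint1.abs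
  have hJabs : |∫ η : ℝ, G η * (ψ (x + a*s*η) - 1)| ≤ ∫ η : ℝ, |G η * (ψ (x + a*s*η) - 1)| := by
    have h := norm_integral_le_integral_norm (f := fun η : ℝ => G η * (ψ (x + a*s*η) - 1)) (μ := volume)
    simp only [Real.norm_eq_abs] at h
    exact h
  have hsplitI : (∫ η in Iic (r x), |G η * (ψ (x + a*s*η) - 1)|)
      + (∫ η in Ioi (r x), |G η * (ψ (x + a*s*η) - 1)|)
      = ∫ η : ℝ, |G η * (ψ (x + a*s*η) - 1)| :=
    intervalIntegral.integral_Iic_add_Ioi habs.integrableOn habs.integrableOn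
  -- part 1 : main region
  have hpart1 : (∫ η in Iic (r x), |G η * (ψ (x + a*s*η) - 1)|) ≤ (ε/2) * (2*Real.sqrt π) := by
    have step1 : ∀ η ∈ Iic (r x), |G η * (ψ (x + a*s*η) - 1)| ≤ (ε/2) * G η := by
      intro η hη
      have hη' : η ≤ r x := hη
      have hre : r x * (a*s₁) = M - x := div_mul_cancel₀ _ (by positivity)
      have hy : x + a*s*η ≤ M := by
        rcases le_total η 0 with h0 | h0
        · nlinarith [mul_nonneg (mul_nonneg ha.le hspos.le) (neg_nonneg.mpr h0)]
        · nlinarith [mul_le_mul_of_nonneg_right (mul_le_mul_of_nonneg_left hss₁ ha.le) h0,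
            mul_le_mul_of_nonneg_left hη' (mul_pos ha hs₁).le]
      have hd := hM _ hy
      rw [Real.dist_eq] at hd
      have hd' : |ψ (x + a*s*η) - 1| ≤ ε/2 := by
        simp only [hψ_def]; exact hd.le
      calc |G η * (ψ (x + a*s*η) - 1)| = G η * |ψ (x + a*s*η) - 1| := by
            rw [abs_mul, abs_of_pos (hGpos η)]
        _ ≤ G η * (ε/2) := mul_le_mul_of_nonneg_left hd' (hGpos η).le
        _ = (ε/2) * G η := mul_comm _ _
    have hGval : (∫ η : ℝ, G η) = 2*Real.sqrt π := gauss_shift_integral c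
    calc (∫ η in Iic (r x), |G η * (ψ (x + a*s*η) - 1)|)
        ≤ ∫ η in Iic (r x), (ε/2) * G η :=
          setIntegral_mono_on habs.integrableOn ((hGint.const_mul _).integrableOn)
            measurableSet_Iic step1
      _ ≤ ∫ η : ℝ, (ε/2) * G η :=
          setIntegral_le_integral (hGint.const_mul _)
            (ae_of_all _ fun η => mul_nonneg (by positivity) (hGpos η).le)
      _ = (ε/2) * (2*Real.sqrt π) := by rw [MeasureTheory.integral_const_mul, hGval]
  -- part 2 : tail region
  have hpart2 : (∫ η in Ioi (r x), |G η * (ψ (x + a*s*η) - 1)|)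
      ≤ C * (4*Real.exp (-(r x - cb)/4)) + C * Real.exp (β*x) * (2*Real.sqrt π * Real.exp Emax) := by
    have step1 : (∫ η in Ioi (r x), |G η * (ψ (x + a*s*η) - 1)|)
        ≤ ∫ η in Ioi (r x), C * (G η + Real.exp (β*x) * Real.exp (-(η - c)^2/4 + B*η)) :=
      setIntegral_mono_on habs.integrableOn hDint.integrableOn measurableSet_Ioi
        (fun η _ => hbnd η)
    have step2 : (∫ η in Ioi (r x), C * (G η + Real.exp (β*x) * Real.exp (-(η - c)^2/4 + B*η)))
        = C * ((∫ η in Ioi (r x), G η)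
          + Real.exp (β*x) * ∫ η in Ioi (r x), Real.exp (-(η - c)^2/4 + B*η)) := by
      rw [MeasureTheory.integral_const_mul,
        MeasureTheory.integral_add hGint.integrableOn ((hGBint.const_mul _).integrableOn),
        MeasureTheory.integral_const_mul]
    have tail1 : (∫ η in Ioi (r x), G η) ≤ 4*Real.exp (-(r x - cb)/4) := by
      calc (∫ η in Ioi (r x), G η) ≤ ∫ η in Ioi (r x), Real.exp (-(η - cb)^2/4) := by
            apply setIntegral_mono_on hGint.integrableOn
              (gauss_shift_integrable cb).integrableOn measurableSet_Ioi
            intro η hη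
            have hη' : r x < η := hη
            apply Real.exp_le_exp.mpr
            have hηcb : cb ≤ η := by linarith
            have hηc : c ≤ η := le_trans hccb hηcb
            nlinarith [mul_nonneg (sub_nonneg.mpr hccb) (by linarith : (0:ℝ) ≤ 2*η - c - cb)]
        _ ≤ 4*Real.exp (-(r x - cb)/4) := gauss_tail cb (r x) hx2
    have tail2 : (∫ η in Ioi (r x), Real.exp (-(η - c)^2/4 + B*η))
        ≤ 2*Real.sqrt π * Real.exp Emax := by
      calc (∫ η in Ioi (r x), Real.exp (-(η - c)^2/4 + B*η))
          ≤ ∫ η : ℝ, Real.exp (-(η - c)^2/4 + B*η) :=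
            setIntegral_le_integral hGBint (ae_of_all _ fun η => (Real.exp_pos _).le)
        _ = 2*Real.sqrt π * Real.exp (B*c + B^2) := gauss_lin_integral c B
        _ ≤ 2*Real.sqrt π * Real.exp Emax := by
            apply mul_le_mul_of_nonneg_left _ (by positivity)
            apply Real.exp_le_exp.mpr
            show β*a*s*(2*k*a*s) + (β*a*s)^2 ≤ |2*k*β + β^2| * a^2 * τ₁
            have h := le_abs_self (2*k*β + β^2)
            have habs2 := abs_nonneg (2*k*β + β^2)
            have h3 : β*a*s*(2*k*a*s) + (β*a*s)^2 = (2*k*β + β^2) * a^2 * τ := by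
              rw [← hs2]; ring
            rw [h3]
            nlinarith [mul_nonneg habs2 (mul_nonneg (sq_nonneg a) (by linarith : (0:ℝ) ≤ τ₁ - τ)),
              mul_nonneg (mul_nonneg (sub_nonneg.mpr h) (sq_nonneg a)) hτpos.le]
    calc (∫ η in Ioi (r x), |G η * (ψ (x + a*s*η) - 1)|)
        ≤ ∫ η in Ioi (r x), C * (G η + Real.exp (β*x) * Real.exp (-(η - c)^2/4 + B*η)) := step1
      _ = C * ((∫ η in Ioi (r x), G η)
          + Real.exp (β*x) * ∫ η in Ioi (r x), Real.exp (-(η - c)^2/4 + B*η)) := step2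
      _ ≤ C * (4*Real.exp (-(r x - cb)/4) + Real.exp (β*x) * (2*Real.sqrt π * Real.exp Emax)) := by
          apply mul_le_mul_of_nonneg_left _ hC0.le
          exact add_le_add tail1 (mul_le_mul_of_nonneg_left tail2 (Real.exp_pos _).le)
      _ = C * (4*Real.exp (-(r x - cb)/4)) + C * Real.exp (β*x) * (2*Real.sqrt π * Real.exp Emax) := by
          ring
  -- assemble
  have hfull : (∫ η : ℝ, |G η * (ψ (x + a*s*η) - 1)|)
      ≤ (ε/2)*(2*Real.sqrt π) + (C * (4*Real.exp (-(r x - cb)/4))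
        + C * Real.exp (β*x) * (2*Real.sqrt π * Real.exp Emax)) := by
    rw [← hsplitI]; exact add_le_add hpart1 hpart2
  have hne : (2*Real.sqrt π) ≠ 0 := by positivity
  show dist (1:ℝ) (w τ x / E) < ε
  have goal_eq : dist (1:ℝ) (w τ x / E)
      = |(2*Real.sqrt π)⁻¹ * ∫ η : ℝ, G η * (ψ (x + a*s*η) - 1)| := by
    rw [Real.dist_eq, abs_sub_comm, hsplit]
  calc dist (1:ℝ) (w τ x / E)
      = |(2*Real.sqrt π)⁻¹ * ∫ η : ℝ, G η * (ψ (x + a*s*η) - 1)| := goal_eq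
    _ = (2*Real.sqrt π)⁻¹ * |∫ η : ℝ, G η * (ψ (x + a*s*η) - 1)| := by
        rw [abs_mul, abs_of_pos (by positivity)]
    _ ≤ (2*Real.sqrt π)⁻¹ * ∫ η : ℝ, |G η * (ψ (x + a*s*η) - 1)| :=
        mul_le_mul_of_nonneg_left hJabs (by positivity)
    _ ≤ (2*Real.sqrt π)⁻¹ * ((ε/2)*(2*Real.sqrt π) + (C * (4*Real.exp (-(r x - cb)/4))
        + C * Real.exp (β*x) * (2*Real.sqrt π * Real.exp Emax))) :=
        mul_le_mul_of_nonneg_left hfull (by positivity)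
    _ = ε/2 + ((2*Real.sqrt π)⁻¹ * (4*C) * Real.exp (-(r x - cb)/4)
        + C * Real.exp Emax * Real.exp (β*x)) := by
        field_simp
    _ < ε/2 + (ε/4 + ε/4) := by
        have := add_lt_add hx3 hx4
        linarith
    _ = ε := by ring
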